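/- Fix α > 2. For s ∈ ℝ, the set {r ≥ 0 : α·c_d(s,r) ≤ r²} is nonempty if and only if |s| ≤ 1. -/

import Mathlib

open MeasureTheory ProbabilityTheory

/-- `c_d(s,r) = E[min(|q| − |r·g + s·q|, 0)²]` for independent standard
Gaussians `q, g`. -/
noncomputable def cd (s r : ℝ) : ℝ :=
  ∫ p : ℝ × ℝ, (min (|p.1| - |r * p.2 + s * p.1|) 0) ^ 2
    ∂((gaussianReal 0 1).prod (gaussianReal 0 1))

section Helpers

open Real Filter Asymptotics

lemma int_exp' : Integrable (fun x : ℝ => rexp (-(2⁻¹:ℝ) * x ^ 2)) :=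
  integrable_exp_neg_mul_sq (by norm_num)

lemma int_sq_exp' : Integrable (fun x : ℝ => x ^ 2 * rexp (-(2⁻¹:ℝ) * x ^ 2)) := by
  have h := integrable_rpow_mul_exp_neg_mul_sq (b := 2⁻¹) (by norm_num) (s := 2) (by norm_num)
  simpa [Real.rpow_natCast] using h

lemma tendsto_G' : Tendsto (fun x : ℝ => x * rexp (-(2⁻¹:ℝ) * x ^ 2)) atTop (nhds 0) := by
  have h := rpow_mul_exp_neg_mul_sq_isLittleO_exp_neg (b := 2⁻¹) (by norm_num) 1
  simp only [Real.rpow_one] at h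
  have h2 : Tendsto (fun x : ℝ => rexp (-(1/2) * x)) atTop (nhds 0) := by
    rw [Real.tendsto_exp_comp_nhds_zero]
    exact Tendsto.const_mul_atTop_of_neg (by norm_num) tendsto_id
  exact h.trans_tendsto h2

lemma deriv_F' (x : ℝ) :
    HasDerivAt (fun x : ℝ => -x * rexp (-(2⁻¹:ℝ) * x ^ 2))
      (x ^ 2 * rexp (-(2⁻¹:ℝ) * x ^ 2) - rexp (-(2⁻¹:ℝ) * x ^ 2)) x := by
  have hw : HasDerivAt (fun x : ℝ => -(2⁻¹:ℝ) * x ^ 2) (-(2⁻¹:ℝ) * (2 * x)) x := by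
    simpa using (hasDerivAt_pow 2 x).const_mul (-(2⁻¹:ℝ))
  have hv : HasDerivAt (fun x : ℝ => rexp (-(2⁻¹:ℝ) * x ^ 2))
      (rexp (-(2⁻¹:ℝ) * x ^ 2) * (-(2⁻¹:ℝ) * (2 * x))) x := hw.exp
  have hu : HasDerivAt (fun x : ℝ => -x) (-1) x := (hasDerivAt_id x).neg
  have : HasDerivAt (fun y : ℝ => -y * rexp (-(2⁻¹:ℝ) * y ^ 2)) _ x := hu.mul hv
  convert this using 1
  ring

lemma key_int' : ∫ x : ℝ, x ^ 2 * rexp (-(2⁻¹:ℝ) * x ^ 2) = Real.sqrt (2 * π) := by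
  have hbot : Tendsto (fun x : ℝ => -x * rexp (-(2⁻¹:ℝ) * x ^ 2)) atBot (nhds 0) := by
    have := tendsto_G'.comp tendsto_neg_atBot_atTop
    refine this.congr fun x => ?_
    simp [Function.comp]
  have htop : Tendsto (fun x : ℝ => -x * rexp (-(2⁻¹:ℝ) * x ^ 2)) atTop (nhds 0) := by
    have := tendsto_G'.neg
    rw [neg_zero] at this
    refine this.congr fun x => ?_
    ring
  have h0 : ∫ x : ℝ, (x ^ 2 * rexp (-(2⁻¹:ℝ) * x ^ 2) - rexp (-(2⁻¹:ℝ) * x ^ 2)) = 0 - 0 :=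
    integral_of_hasDerivAt_of_tendsto deriv_F' (int_sq_exp'.sub int_exp') hbot htop
  rw [integral_sub int_sq_exp' int_exp'] at h0
  have hg : ∫ x : ℝ, rexp (-(2⁻¹:ℝ) * x ^ 2) = Real.sqrt (2 * π) := by
    rw [integral_gaussian]
    norm_num [mul_comm]
  linarith [h0, hg]

lemma gauss_pdf_eq' (x : ℝ) :
    gaussianPDFReal 0 1 x = (Real.sqrt (2 * π))⁻¹ * rexp (-(2⁻¹:ℝ) * x ^ 2) := by
  simp only [gaussianPDFReal, NNReal.coe_one, mul_one, sub_zero]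
  ring_nf

lemma gauss_integral_eq' (g : ℝ → ℝ) :
    ∫ x, g x ∂(gaussianReal 0 1) = ∫ x, gaussianPDFReal 0 1 x * g x := by
  rw [gaussianReal_of_var_ne_zero 0 one_ne_zero]
  have hmeas : Measurable fun x => (gaussianPDFReal 0 1 x).toNNReal :=
    (measurable_gaussianPDFReal 0 1).real_toNNReal
  have hd : gaussianPDF 0 1 = fun x => ((gaussianPDFReal 0 1 x).toNNReal : ENNReal) := by
    funext x; rfl
  rw [hd, integral_withDensity_eq_integral_smul hmeas]
  congr 1
  funext x
  simp [NNReal.smul_def, Real.coe_toNNReal _ (gaussianPDFReal_nonneg 0 1 x)]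

lemma gauss_integrable_iff' (g : ℝ → ℝ) :
    Integrable g (gaussianReal 0 1) ↔
      Integrable (fun x => gaussianPDFReal 0 1 x * g x) volume := by
  rw [gaussianReal_of_var_ne_zero 0 one_ne_zero]
  have hmeas : Measurable fun x => (gaussianPDFReal 0 1 x).toNNReal :=
    (measurable_gaussianPDFReal 0 1).real_toNNReal
  have hd : gaussianPDF 0 1 = fun x => ((gaussianPDFReal 0 1 x).toNNReal : ENNReal) := by
    funext x; rfl
  rw [hd, integrable_withDensity_iff_integrable_smul hmeas]
  constructor <;> intro h <;> refine h.congr (Filter.Eventually.of_forall fun x => ?_) <;>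
    simp [NNReal.smul_def, Real.coe_toNNReal _ (gaussianPDFReal_nonneg 0 1 x)]

lemma sqrt2pi_pos' : (0:ℝ) < Real.sqrt (2 * π) := Real.sqrt_pos.2 (by positivity)

lemma gauss_integrable_sq' : Integrable (fun x : ℝ => x ^ 2) (gaussianReal 0 1) := by
  rw [gauss_integrable_iff']
  have : (fun x => gaussianPDFReal 0 1 x * x ^ 2) =
      fun x => (Real.sqrt (2 * π))⁻¹ * (x ^ 2 * rexp (-(2⁻¹:ℝ) * x ^ 2)) := by
    funext x; rw [gauss_pdf_eq']; ring
  rw [this]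
  exact int_sq_exp'.const_mul _

lemma gauss_moment_two' : ∫ x, x ^ 2 ∂(gaussianReal 0 1) = 1 := by
  rw [gauss_integral_eq']
  have : (fun x => gaussianPDFReal 0 1 x * x ^ 2) =
      fun x => (Real.sqrt (2 * π))⁻¹ * (x ^ 2 * rexp (-(2⁻¹:ℝ) * x ^ 2)) := by
    funext x; rw [gauss_pdf_eq']; ring
  rw [this, integral_const_mul, key_int', inv_mul_cancel₀ sqrt2pi_pos'.ne']

lemma gauss_map_neg' : (gaussianReal 0 1).map (fun x : ℝ => -x) = gaussianReal 0 1 := by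
  have h := gaussianReal_map_const_mul (μ := 0) (v := 1) (-1)
  simp only [neg_one_mul, mul_zero] at h
  convert h using 2
  ext : 1
  norm_num

noncomputable def μ2' : Measure (ℝ × ℝ) := (gaussianReal 0 1).prod (gaussianReal 0 1)

lemma map_fst_μ2' : μ2'.map Prod.fst = gaussianReal 0 1 := by
  rw [μ2', Measure.map_fst_prod]; simp

lemma map_snd_μ2' : μ2'.map Prod.snd = gaussianReal 0 1 := by
  rw [μ2', Measure.map_snd_prod]; simp

lemma integrable_fst_sq' : Integrable (fun p : ℝ × ℝ => p.1 ^ 2) μ2' := by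
  have h : Integrable (fun x : ℝ => x ^ 2) (μ2'.map Prod.fst) := by
    rw [map_fst_μ2']; exact gauss_integrable_sq'
  exact (integrable_map_measure h.aestronglyMeasurable measurable_fst.aemeasurable).1 h

lemma integrable_snd_sq' : Integrable (fun p : ℝ × ℝ => p.2 ^ 2) μ2' := by
  have h : Integrable (fun x : ℝ => x ^ 2) (μ2'.map Prod.snd) := by
    rw [map_snd_μ2']; exact gauss_integrable_sq'
  exact (integrable_map_measure h.aestronglyMeasurable measurable_snd.aemeasurable).1 h

lemma integral_fst_sq' : ∫ p, p.1 ^ 2 ∂μ2' = 1 := by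
  have h : ∫ x, x ^ 2 ∂(μ2'.map Prod.fst) = 1 := by rw [map_fst_μ2']; exact gauss_moment_two'
  rwa [integral_map measurable_fst.aemeasurable
    (by exact (continuous_pow 2).aestronglyMeasurable)] at h

lemma integral_snd_sq' : ∫ p, p.2 ^ 2 ∂μ2' = 1 := by
  have h : ∫ x, x ^ 2 ∂(μ2'.map Prod.snd) = 1 := by rw [map_snd_μ2']; exact gauss_moment_two'
  rwa [integral_map measurable_snd.aemeasurable
    (by exact (continuous_pow 2).aestronglyMeasurable)] at h

lemma μ2'_map_neg : μ2'.map (Prod.map (id : ℝ → ℝ) (fun x : ℝ => -x)) = μ2' := by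
  rw [μ2', ← Measure.map_prod_map _ _ measurable_id measurable_neg]
  rw [Measure.map_id, gauss_map_neg']

lemma abs_add_of_mul_nonneg' {a b : ℝ} (h : 0 ≤ a * b) : |a| + |b| ≤ |a + b| := by
  have h2 : (|a| + |b|) ^ 2 ≤ |a + b| ^ 2 := by
    nlinarith [sq_abs (a + b), sq_abs a, sq_abs b, abs_mul a b, abs_of_nonneg h]
  nlinarith [abs_nonneg (a + b), abs_nonneg a, abs_nonneg b]

lemma pointwise_key' {s r : ℝ} (hs : 1 ≤ |s|) (hr : 0 ≤ r) (q g : ℝ) :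
    (|s| - 1) ^ 2 * q ^ 2 + r ^ 2 * g ^ 2 ≤
      (min (|q| - |r * g + s * q|) 0) ^ 2 + (min (|q| - |r * -g + s * q|) 0) ^ 2 := by
  have habs : r * |g| + |s| * |q| ≤ |r * g + s * q| ∨
      r * |g| + |s| * |q| ≤ |r * -g + s * q| := by
    rcases le_total 0 ((r * g) * (s * q)) with h | h
    · left
      calc r * |g| + |s| * |q| = |r * g| + |s * q| := by
            rw [abs_mul, abs_mul, abs_of_nonneg hr]
        _ ≤ |r * g + s * q| := abs_add_of_mul_nonneg' h
    · right
      calc r * |g| + |s| * |q| = |r * -g| + |s * q| := by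
            rw [abs_mul, abs_mul, abs_of_nonneg hr, abs_neg]
        _ ≤ |r * -g + s * q| := abs_add_of_mul_nonneg' (by nlinarith)
  have key : ∀ X : ℝ, r * |g| + |s| * |q| ≤ X →
      (|s| - 1) ^ 2 * q ^ 2 + r ^ 2 * g ^ 2 ≤ (min (|q| - X) 0) ^ 2 := by
    intro X hX
    set t := (|s| - 1) * |q| + r * |g| with ht_def
    have ht : 0 ≤ t :=
      add_nonneg (mul_nonneg (by linarith) (abs_nonneg q)) (mul_nonneg hr (abs_nonneg g))
    have hm : min (|q| - X) 0 ≤ -t := by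
      refine le_trans (min_le_left _ _) ?_
      simp only [ht_def]; linarith
    have hsq : t ^ 2 ≤ (min (|q| - X) 0) ^ 2 := by nlinarith [hm, ht]
    have hexp : (|s| - 1) ^ 2 * q ^ 2 + r ^ 2 * g ^ 2 ≤ t ^ 2 := by
      simp only [ht_def]
      nlinarith [sq_abs q, sq_abs g,
        mul_nonneg (mul_nonneg (show (0:ℝ) ≤ |s| - 1 by linarith) (abs_nonneg q))
          (mul_nonneg hr (abs_nonneg g))]
    linarith
  rcases habs with h | h
  · have := key _ h
    nlinarith [sq_nonneg (min (|q| - |r * -g + s * q|) 0)]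
  · have := key _ h
    nlinarith [sq_nonneg (min (|q| - |r * g + s * q|) 0)]

lemma cont_f' (s r c : ℝ) :
    Continuous fun p : ℝ × ℝ => (min (|p.1| - |r * (c * p.2) + s * p.1|) 0) ^ 2 :=
  (((continuous_fst.abs.sub ((continuous_const.mul (continuous_const.mul continuous_snd)).add
    (continuous_const.mul continuous_fst)).abs).min continuous_const).pow 2)

lemma f_bound' (s r c : ℝ) (hc : |c| = 1) (p : ℝ × ℝ) :
    ‖(min (|p.1| - |r * (c * p.2) + s * p.1|) 0) ^ 2‖ ≤
      2 * (1 + |s|) ^ 2 * p.1 ^ 2 + 2 * r ^ 2 * p.2 ^ 2 := by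
  rw [Real.norm_eq_abs, abs_of_nonneg (sq_nonneg _)]
  have hc2 : c ^ 2 = 1 := by nlinarith [sq_abs c]
  have hrc : (r * (c * p.2)) ^ 2 = r ^ 2 * p.2 ^ 2 := by
    rw [mul_pow, mul_pow, hc2]; ring
  have hXsq : |r * (c * p.2) + s * p.1| ^ 2 ≤ 2 * (r ^ 2 * p.2 ^ 2) + 2 * (s * p.1) ^ 2 := by
    rw [sq_abs]
    nlinarith [sq_nonneg (r * (c * p.2) - s * p.1), hrc]
  rcases le_total (|p.1| - |r * (c * p.2) + s * p.1|) 0 with h | h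
  · rw [min_eq_left h]
    nlinarith [hXsq, sq_abs p.1, sq_abs s,
      mul_nonneg (abs_nonneg p.1) (abs_nonneg (r * (c * p.2) + s * p.1)),
      mul_nonneg (abs_nonneg s) (sq_nonneg p.1)]
  · rw [min_eq_right h]
    have h0 : (0:ℝ) ^ 2 = 0 := by norm_num
    rw [h0]
    positivity

lemma integrable_f' (s r c : ℝ) (hc : |c| = 1) :
    Integrable (fun p : ℝ × ℝ => (min (|p.1| - |r * (c * p.2) + s * p.1|) 0) ^ 2) μ2' := by
  refine Integrable.mono' (g := fun p : ℝ × ℝ =>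
      2 * (1 + |s|) ^ 2 * p.1 ^ 2 + 2 * r ^ 2 * p.2 ^ 2) ?_ ?_ ?_
  · exact (integrable_fst_sq'.const_mul _).add (integrable_snd_sq'.const_mul _)
  · exact (cont_f' s r c).aestronglyMeasurable
  · exact Filter.Eventually.of_forall (f_bound' s r c hc)

lemma cd_lower' {s r : ℝ} (hs : 1 ≤ |s|) (hr : 0 ≤ r) :
    ((|s| - 1) ^ 2 + r ^ 2) / 2 ≤ cd s r := by
  set f : ℝ × ℝ → ℝ := fun p => (min (|p.1| - |r * p.2 + s * p.1|) 0) ^ 2 with hf_def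
  set fT : ℝ × ℝ → ℝ := fun p => (min (|p.1| - |r * -p.2 + s * p.1|) 0) ^ 2 with hfT_def
  have hfi : Integrable f μ2' := by
    have := integrable_f' s r 1 (by norm_num)
    simpa using this
  have hfTi : Integrable fT μ2' := by
    have := integrable_f' s r (-1) (by norm_num)
    refine this.congr (Filter.Eventually.of_forall fun p => ?_)
    simp [hfT_def, neg_mul, mul_neg]
  have hcd : cd s r = ∫ p, f p ∂μ2' := rfl
  have hT : ∫ p, fT p ∂μ2' = ∫ p, f p ∂μ2' := by
    have hmeas : AEStronglyMeasurable f (μ2'.map (Prod.map (id : ℝ → ℝ) (fun x : ℝ => -x))) := by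
      rw [μ2'_map_neg]; exact hfi.aestronglyMeasurable
    have hmap := integral_map (μ := μ2')
      (φ := Prod.map (id : ℝ → ℝ) (fun x : ℝ => -x))
      ((measurable_id.prodMap measurable_neg).aemeasurable) hmeas
    rw [μ2'_map_neg] at hmap
    have heq : ∫ p, fT p ∂μ2' = ∫ x, f (Prod.map (id : ℝ → ℝ) (fun x : ℝ => -x) x) ∂μ2' := by
      refine integral_congr_ae (Filter.Eventually.of_forall fun p => ?_)
      simp [hfT_def, hf_def, Prod.map]
    rw [heq, ← hmap]
  have hgi : Integrable (fun p : ℝ × ℝ => (|s| - 1) ^ 2 * p.1 ^ 2 + r ^ 2 * p.2 ^ 2) μ2' :=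
    (integrable_fst_sq'.const_mul _).add (integrable_snd_sq'.const_mul _)
  have h1 : ∫ p, ((|s| - 1) ^ 2 * p.1 ^ 2 + r ^ 2 * p.2 ^ 2) ∂μ2' ≤ ∫ p, (f p + fT p) ∂μ2' :=
    integral_mono hgi (hfi.add hfTi) fun p => pointwise_key' hs hr p.1 p.2
  rw [integral_add hfi hfTi, hT] at h1
  rw [integral_add (integrable_fst_sq'.const_mul _) (integrable_snd_sq'.const_mul _),
    integral_const_mul, integral_const_mul, integral_fst_sq', integral_snd_sq'] at h1
  rw [hcd]
  linarith

end Helpers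

/-- Fix `α > 2`.  For `s ∈ ℝ`, the set
`{r ≥ 0 : α·c_d(s,r) ≤ r²}` is nonempty if and only if `|s| ≤ 1`. -/
theorem feasibility_iff_abs_le_one (α : ℝ) (hα : 2 < α) (s : ℝ) :
    {r : ℝ | 0 ≤ r ∧ α * cd s r ≤ r ^ 2}.Nonempty ↔ |s| ≤ 1 := by
  constructor
  · rintro ⟨r, hr0, hrle⟩
    by_contra hcon
    push_neg at hcon
    have hcd := cd_lower' (le_of_lt hcon) hr0
    have he2 : 0 < (|s| - 1) ^ 2 := pow_pos (by linarith) 2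
    have hcdpos : 0 < cd s r := lt_of_lt_of_le (by positivity) hcd
    nlinarith [mul_pos (show (0:ℝ) < α - 2 by linarith) hcdpos]
  · intro hs
    refine ⟨0, le_refl 0, ?_⟩
    have hzero : cd s 0 = 0 := by
      have hfun : (fun p : ℝ × ℝ => (min (|p.1| - |(0:ℝ) * p.2 + s * p.1|) 0) ^ 2)
          = fun _ => (0:ℝ) := by
        funext p
        have h1 : |(0:ℝ) * p.2 + s * p.1| ≤ |p.1| := by
          rw [zero_mul, zero_add, abs_mul]
          calc |s| * |p.1| ≤ 1 * |p.1| := mul_le_mul_of_nonneg_right hs (abs_nonneg _)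
            _ = |p.1| := one_mul _
        rw [min_eq_right (by linarith)]
        norm_num
      unfold cd
      rw [hfun]
      simp
    rw [hzero, mul_zero]
    positivity
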